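/- arXiv:2102.09924 — 2 statements merged into one kernel-verified Lean document; each statement's English description precedes it below -/
import Mathlib

section
/- Let f : ℝ × [u,v] → ℝ be locally Lipschitz continuous, let F(x) = ∫_u^v f(x,s) ds, let x ∈ ℝ, and let E ⊆ [u,v] be measurable with [u,v]\E of Lebesgue measure zero such that for every s ∈ E the map y ↦ f(y,s) is differentiable at x. Then F is differentiable at x and F'(x) = ∫_E (∂f/∂x)(x,s) ds. -/
open MeasureTheory

theorem interchange_deriv_integral
    (u v : ℝ) (huv : u < v) (f : ℝ → ℝ → ℝ)
    (hf : ∀ p : ℝ × ℝ, p.2 ∈ Set.Icc u v → ∃ K : NNReal, ∃ t ∈ nhdsWithin p (Set.univ ×ˢ Set.Icc u v),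
      LipschitzOnWith K (fun q : ℝ × ℝ => f q.1 q.2) t)
    (F : ℝ → ℝ) (hF : ∀ x : ℝ, F x = ∫ s in Set.Icc u v, f x s)
    (x : ℝ) (E : Set ℝ) (hE : MeasurableSet E) (hEsub : E ⊆ Set.Icc u v)
    (hnull : volume (Set.Icc u v \ E) = 0)
    (hdiff : ∀ s ∈ E, DifferentiableAt ℝ (fun y => f y s) x) :
    HasDerivAt F (∫ s in E, deriv (fun y => f y s) x) x := by
  classical
  set μ : Measure ℝ := volume.restrict (Set.Icc u v) with hμ
  -- continuity of f on univ ×ˢ Icc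
  have hcont : ContinuousOn (fun q : ℝ × ℝ => f q.1 q.2) (Set.univ ×ˢ Set.Icc u v) := by
    intro p hp
    obtain ⟨K, t, ht, hlip⟩ := hf p hp.2
    have hpt : p ∈ t := mem_of_mem_nhdsWithin hp ht
    exact (hlip.continuousOn.continuousWithinAt hpt).mono_of_mem_nhdsWithin ht
  have hconts : ∀ y : ℝ, ContinuousOn (fun s => f y s) (Set.Icc u v) := by
    intro y
    have : ContinuousOn (fun s : ℝ => ((y, s) : ℝ × ℝ)) (Set.Icc u v) :=
      (Continuous.prodMk_right y).continuousOn
    exact hcont.comp this (fun s hs => ⟨Set.mem_univ _, hs⟩)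
  -- uniform local Lipschitz bound via compactness
  have key : ∃ ε > 0, ∃ K : NNReal, ∀ s ∈ Set.Icc u v,
      LipschitzOnWith K (fun y => f y s) (Metric.ball x ε) := by
    have h : ∀ s ∈ Set.Icc u v, ∃ r > 0, ∃ K : NNReal, ∀ s' ∈ Metric.ball s r,
        s' ∈ Set.Icc u v → LipschitzOnWith K (fun y => f y s') (Metric.ball x r) := by
      intro s hs
      obtain ⟨K, t, ht, hlip⟩ := hf (x, s) hs
      rw [Metric.mem_nhdsWithin_iff] at ht
      obtain ⟨r, hr, hsub⟩ := ht
      refine ⟨r, hr, K, fun s' hs' hs'I => ?_⟩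
      intro y hy y' hy'
      have hmem : ∀ z : ℝ, z ∈ Metric.ball x r → ((z, s') : ℝ × ℝ) ∈ t := by
        intro z hz
        apply hsub
        constructor
        · rw [Metric.mem_ball, Prod.dist_eq]
          exact max_lt (Metric.mem_ball.1 hz) (Metric.mem_ball.1 hs')
        · exact ⟨Set.mem_univ _, hs'I⟩
      have := hlip (hmem y hy) (hmem y' hy')
      simpa [Prod.edist_eq] using this
    choose! r hr K hK using h
    obtain ⟨T, hTsub, hTcov⟩ := isCompact_Icc.elim_nhds_subcover (fun s => Metric.ball s (r s))
      (fun s hs => Metric.ball_mem_nhds s (hr s hs))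
    have hTne : T.Nonempty := by
      by_contra hne
      rw [Finset.not_nonempty_iff_eq_empty] at hne
      have := hTcov (Set.left_mem_Icc.2 huv.le)
      simp [hne] at this
    refine ⟨T.inf' hTne r, ?_, T.sup K, ?_⟩
    · exact (Finset.lt_inf'_iff _).2 fun t ht => hr t (hTsub t ht)
    · intro s hs
      obtain ⟨t, htT, hst⟩ := Set.mem_iUnion₂.1 (hTcov hs)
      have hlip := (hK t (hTsub t htT) s hst hs).mono
        (Metric.ball_subset_ball (Finset.inf'_le r htT))
      intro a ha b hb
      exact (hlip ha hb).trans
        (mul_le_mul_left (ENNReal.coe_le_coe.2 (Finset.le_sup htT)) _)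
  obtain ⟨ε, hε, K, hKlip⟩ := key
  -- a.e. membership in E
  have hEae : ∀ᵐ s ∂μ, s ∈ E := by
    rw [hμ, ae_restrict_iff' measurableSet_Icc]
    rw [ae_iff]
    refine measure_mono_null ?_ hnull
    intro s hs
    simp only [Set.mem_setOf_eq, Classical.not_imp] at hs
    exact hs
  -- a.e. differentiability
  have h_diff : ∀ᵐ s ∂μ, HasDerivAt (fun y => f y s) (deriv (fun y => f y s) x) x :=
    hEae.mono fun s hs => (hdiff s hs).hasDerivAt
  -- measurability of the derivative
  have hF'_meas : AEStronglyMeasurable (fun s => deriv (fun y => f y s) x) μ := by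
    set g : ℕ → ℝ → ℝ := fun n s => (f (x + (n + 1 : ℝ)⁻¹) s - f x s) * (n + 1 : ℝ)
    have hg : ∀ n, AEStronglyMeasurable (g n) μ := by
      intro n
      apply ContinuousOn.aestronglyMeasurable _ measurableSet_Icc
      exact (((hconts _).sub (hconts x)).mul continuousOn_const)
    refine aestronglyMeasurable_of_tendsto_ae Filter.atTop hg ?_
    refine h_diff.mono fun s hs => ?_
    have hslope := (hasDerivAt_iff_tendsto_slope).1 hs
    have hseq : Filter.Tendsto (fun n : ℕ => x + (n + 1 : ℝ)⁻¹) Filter.atTop (nhdsWithin x {x}ᶜ) := by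
      apply tendsto_nhdsWithin_of_tendsto_nhds_of_eventually_within
      · have : Filter.Tendsto (fun n : ℕ => ((n : ℝ) + 1)⁻¹) Filter.atTop (nhds 0) := by
          exact tendsto_one_div_add_atTop_nhds_zero_nat.congr (by intro n; rw [one_div])
        simpa using this.const_add x
      · refine Filter.Eventually.of_forall fun n => ?_
        have : ((n : ℝ) + 1)⁻¹ ≠ 0 := by positivity
        simp [Set.mem_compl_iff, this]
    have := hslope.comp hseq
    refine this.congr fun n => ?_
    have hne : ((n : ℝ) + 1)⁻¹ ≠ 0 := by positivity
    simp only [Function.comp, slope_def_field, add_sub_cancel_left, div_inv_eq_mul, g]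
  -- integrability of f x
  have hF_int : Integrable (fun s => f x s) μ := by
    rw [hμ]
    exact ContinuousOn.integrableOn_compact isCompact_Icc (hconts x)
  have hF_meas : ∀ᶠ y in nhds x, AEStronglyMeasurable (fun s => f y s) μ :=
    Filter.Eventually.of_forall fun y =>
      ContinuousOn.aestronglyMeasurable (hconts y) measurableSet_Icc
  have h_lip : ∀ᵐ s ∂μ, LipschitzOnWith (Real.nnabs ((K : ℝ))) (fun y => f y s)
      (Metric.ball x ε) := by
    rw [hμ, ae_restrict_iff' measurableSet_Icc]
    refine Filter.Eventually.of_forall fun s hs => ?_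
    have : Real.nnabs ((K : ℝ)) = K := by
      ext
      simp [Real.coe_nnabs, abs_of_nonneg K.2]
    rw [this]
    exact hKlip s hs
  have hmain := hasDerivAt_integral_of_dominated_loc_of_lip (μ := μ)
    (F := fun y s => f y s) (x₀ := x) (bound := fun _ => (K : ℝ)) (Metric.ball_mem_nhds x hε) hF_meas hF_int hF'_meas
    h_lip (integrable_const _) h_diff
  have hEeq : (∫ s in Set.Icc u v, deriv (fun y => f y s) x) =
      ∫ s in E, deriv (fun y => f y s) x := by
    apply setIntegral_congr_set
    rw [MeasureTheory.ae_eq_set]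
    constructor
    · exact hnull
    · rw [Set.diff_eq_empty.2 hEsub]
      simp
  have hFeq : F = fun y => ∫ s in Set.Icc u v, f y s := funext hF
  rw [hFeq, ← hEeq]
  exact hmain.2
end

section
/- In the one-hidden-layer ReLU ANN setting with constant target α, the squared norm of the generalized gradient satisfies ‖G(φ)‖² ≤ (8‖φ‖² + 4) L_∞(φ) for every parameter vector φ ∈ ℝ^{3H+1}. -/
open MeasureTheory

noncomputable section

/-- weight parameters -/
def wp (H : ℕ) (φ : EuclideanSpace ℝ (Fin (3*H+1))) (j : Fin H) : ℝ := φ ⟨j.1, by omega⟩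
/-- bias parameters -/
def bp (H : ℕ) (φ : EuclideanSpace ℝ (Fin (3*H+1))) (j : Fin H) : ℝ := φ ⟨H + j.1, by omega⟩
/-- outer weight parameters -/
def vp (H : ℕ) (φ : EuclideanSpace ℝ (Fin (3*H+1))) (j : Fin H) : ℝ := φ ⟨2*H + j.1, by omega⟩
/-- output bias -/
def cp (H : ℕ) (φ : EuclideanSpace ℝ (Fin (3*H+1))) : ℝ := φ ⟨3*H, by omega⟩

/-- realization of the one-hidden-layer ReLU network -/
def realization (H : ℕ) (φ : EuclideanSpace ℝ (Fin (3*H+1))) (x : ℝ) : ℝ :=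
  cp H φ + ∑ j : Fin H, vp H φ j * max (wp H φ j * x + bp H φ j) 0

/-- risk with constant target α -/
def risk (H : ℕ) (α : ℝ) (φ : EuclideanSpace ℝ (Fin (3*H+1))) : ℝ :=
  ∫ y in (0:ℝ)..1, (realization H φ y - α)^2

/-- activity interval I_j^φ -/
def actSet (H : ℕ) (φ : EuclideanSpace ℝ (Fin (3*H+1))) (j : Fin H) : Set ℝ :=
  {x | x ∈ Set.Icc (0:ℝ) 1 ∧ 0 < wp H φ j * x + bp H φ j}

/-- generalized gradient G -/
def grad (H : ℕ) (α : ℝ) (φ : EuclideanSpace ℝ (Fin (3*H+1))) :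
    EuclideanSpace ℝ (Fin (3*H+1)) := WithLp.toLp 2 (fun i =>
  if h : i.1 < H then
    2 * vp H φ ⟨i.1, h⟩ * ∫ x in actSet H φ ⟨i.1, h⟩, x * (realization H φ x - α)
  else if h2 : i.1 < 2*H then
    2 * vp H φ ⟨i.1 - H, by omega⟩ * ∫ x in actSet H φ ⟨i.1 - H, by omega⟩, (realization H φ x - α)
  else if h3 : i.1 < 3*H then
    2 * ∫ x in (0:ℝ)..1,
      max (wp H φ ⟨i.1 - 2*H, by omega⟩ * x + bp H φ ⟨i.1 - 2*H, by omega⟩) 0 * (realization H φ x - α)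
  else 2 * ∫ x in (0:ℝ)..1, (realization H φ x - α))

/-- Lyapunov function V -/
def lyap (H : ℕ) (α : ℝ) (φ : EuclideanSpace ℝ (Fin (3*H+1))) : ℝ :=
  ‖φ‖^2 + (cp H φ - 2*α)^2

/- ——— auxiliary lemmas ——— -/

lemma jensen_sq (f : ℝ → ℝ) (hf : Continuous f) :
    (∫ x in Set.Icc (0:ℝ) 1, f x)^2 ≤ ∫ x in Set.Icc (0:ℝ) 1, (f x)^2 := by
  set μ := volume.restrict (Set.Icc (0:ℝ) 1) with hμdef
  have hμ : IsProbabilityMeasure μ := ⟨by simp [hμdef, Real.volume_Icc]⟩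
  have h1 : Integrable f μ := hf.integrableOn_Icc
  have h2 : Integrable (fun x => (f x)^2) μ := (hf.pow 2).integrableOn_Icc
  set m := ∫ x, f x ∂μ with hm
  have h0 : 0 ≤ ∫ x, (f x - m)^2 ∂μ := integral_nonneg (fun x => sq_nonneg _)
  have hexp : ∫ x, (f x - m)^2 ∂μ = (∫ x, (f x)^2 ∂μ) - m^2 := by
    have he : ∀ x, (f x - m)^2 = ((f x)^2 - (2*m) * f x) + m^2 := fun x => by ring
    simp_rw [he]
    have hI1 : Integrable (fun x => f x ^ 2 - 2 * m * f x) μ := h2.sub (h1.const_mul _)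
    rw [integral_add hI1 (integrable_const _),
      integral_sub h2 (h1.const_mul _), integral_const_mul]
    simp [measure_univ, ← hm]
    ring
  linarith [hexp ▸ h0]

lemma bound_int (f g : ℝ → ℝ) (hf : Continuous f) (hg : Continuous g)
    (S : Set ℝ) (hS : MeasurableSet S) (hSsub : S ⊆ Set.Icc 0 1) (M : ℝ)
    (hM : ∀ x ∈ Set.Icc (0:ℝ) 1, |g x| ≤ M) :
    (∫ x in S, g x * f x)^2 ≤ M^2 * ∫ x in Set.Icc (0:ℝ) 1, (f x)^2 := by
  have hM0 : 0 ≤ M := le_trans (abs_nonneg _) (hM 0 ⟨le_refl _, zero_le_one⟩)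
  have hint_gf : IntegrableOn (fun x => g x * f x) S :=
    ((hg.mul hf).integrableOn_Icc).mono_set hSsub
  have hint_absf : IntegrableOn (fun x => |f x|) (Set.Icc (0:ℝ) 1) :=
    hf.abs.integrableOn_Icc
  have step1 : |∫ x in S, g x * f x| ≤ ∫ x in S, |g x * f x| := by
    simpa [Real.norm_eq_abs, abs_mul] using
      norm_integral_le_integral_norm (μ := volume.restrict S) (fun x => g x * f x)
  have step2 : ∫ x in S, |g x * f x| ≤ ∫ x in S, M * |f x| := by
    have hMf : IntegrableOn (fun x => M * |f x|) (Set.Icc (0:ℝ) 1) := hint_absf.const_mul M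
    apply setIntegral_mono_on hint_gf.abs (hMf.mono_set hSsub) hS
    intro x hx
    simp only [abs_mul]
    exact mul_le_mul_of_nonneg_right (hM x (hSsub hx)) (abs_nonneg _)
  have step3 : ∫ x in S, M * |f x| ≤ ∫ x in Set.Icc (0:ℝ) 1, M * |f x| := by
    have hMf : IntegrableOn (fun x => M * |f x|) (Set.Icc (0:ℝ) 1) := hint_absf.const_mul M
    exact setIntegral_mono_set hMf
      (Filter.Eventually.of_forall (fun x => mul_nonneg hM0 (abs_nonneg _)))
      (HasSubset.Subset.eventuallyLE hSsub)
  have habs : |∫ x in S, g x * f x| ≤ M * ∫ x in Set.Icc (0:ℝ) 1, |f x| := by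
    simp only [integral_const_mul] at step2 step3
    linarith
  calc (∫ x in S, g x * f x)^2 = |∫ x in S, g x * f x|^2 := (sq_abs _).symm
    _ ≤ (M * ∫ x in Set.Icc (0:ℝ) 1, |f x|)^2 :=
        pow_le_pow_left₀ (abs_nonneg _) habs 2
    _ = M^2 * (∫ x in Set.Icc (0:ℝ) 1, |f x|)^2 := by ring
    _ ≤ M^2 * ∫ x in Set.Icc (0:ℝ) 1, (f x)^2 := by
        have := jensen_sq (fun x => |f x|) hf.abs
        simp_rw [sq_abs] at this
        exact mul_le_mul_of_nonneg_left this (sq_nonneg M)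

/-- per-coordinate bound function -/
def bnd (H : ℕ) (φ : EuclideanSpace ℝ (Fin (3*H+1))) (L : ℝ) (n : ℕ) : ℝ :=
  if h : n < H then 4 * (vp H φ ⟨n, h⟩)^2 * L
  else if h2 : n < 2*H then 4 * (vp H φ ⟨n - H, by omega⟩)^2 * L
  else if h3 : n < 3*H then
    8 * ((wp H φ ⟨n - 2*H, by omega⟩)^2 + (bp H φ ⟨n - 2*H, by omega⟩)^2) * L
  else 4 * L

lemma bnd_eval1 (H : ℕ) (φ : EuclideanSpace ℝ (Fin (3*H+1))) (L : ℝ) (j : Fin H) :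
    bnd H φ L j.1 = 4 * (vp H φ j)^2 * L := by
  rw [bnd, dif_pos j.isLt, Fin.eta]

lemma bnd_eval2 (H : ℕ) (φ : EuclideanSpace ℝ (Fin (3*H+1))) (L : ℝ) (j : Fin H) :
    bnd H φ L (H + j.1) = 4 * (vp H φ j)^2 * L := by
  have hj := j.isLt
  rw [bnd, dif_neg (by omega), dif_pos (by omega)]
  simp [Nat.add_sub_cancel_left, Fin.eta]

lemma bnd_eval3 (H : ℕ) (φ : EuclideanSpace ℝ (Fin (3*H+1))) (L : ℝ) (j : Fin H) :
    bnd H φ L (2*H + j.1) = 8 * ((wp H φ j)^2 + (bp H φ j)^2) * L := by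
  have hj := j.isLt
  rw [bnd, dif_neg (by omega), dif_neg (by omega), dif_pos (by omega)]
  simp [Nat.add_sub_cancel_left, Fin.eta]

lemma bnd_eval4 (H : ℕ) (φ : EuclideanSpace ℝ (Fin (3*H+1))) (L : ℝ) :
    bnd H φ L (3*H) = 4 * L := by
  rw [bnd, dif_neg (by omega), dif_neg (by omega), dif_neg (by omega)]

/-- squared coordinate function -/
def sqcoord (H : ℕ) (φ : EuclideanSpace ℝ (Fin (3*H+1))) (n : ℕ) : ℝ :=
  if h : n < 3*H+1 then (φ ⟨n, h⟩)^2 else 0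

lemma sqcoord_w (H : ℕ) (φ : EuclideanSpace ℝ (Fin (3*H+1))) (j : Fin H) :
    sqcoord H φ j.1 = (wp H φ j)^2 := by
  have hj := j.isLt
  rw [sqcoord, dif_pos (by omega)]; rfl

lemma sqcoord_b (H : ℕ) (φ : EuclideanSpace ℝ (Fin (3*H+1))) (j : Fin H) :
    sqcoord H φ (H + j.1) = (bp H φ j)^2 := by
  have hj := j.isLt
  rw [sqcoord, dif_pos (by omega)]; rfl

lemma sqcoord_v (H : ℕ) (φ : EuclideanSpace ℝ (Fin (3*H+1))) (j : Fin H) :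
    sqcoord H φ (2*H + j.1) = (vp H φ j)^2 := by
  have hj := j.isLt
  rw [sqcoord, dif_pos (by omega)]; rfl

lemma sqcoord_c (H : ℕ) (φ : EuclideanSpace ℝ (Fin (3*H+1))) :
    sqcoord H φ (3*H) = (cp H φ)^2 := by
  rw [sqcoord, dif_pos (by omega)]; rfl

lemma split_sum (H : ℕ) (f : ℕ → ℝ) :
    ∑ i ∈ Finset.range (3*H+1), f i
      = (∑ i ∈ Finset.range H, f i) + (∑ i ∈ Finset.range H, f (H+i))
        + (∑ i ∈ Finset.range H, f (2*H+i)) + f (3*H) := by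
  rw [Finset.sum_range_succ]
  congr 1
  rw [← Finset.sum_range_add_sum_Ico _ (by omega : H ≤ 3*H),
    ← Finset.sum_Ico_consecutive _ (by omega : H ≤ 2*H) (by omega : 2*H ≤ 3*H),
    Finset.sum_Ico_eq_sum_range, Finset.sum_Ico_eq_sum_range]
  have e1 : 2*H - H = H := by omega
  have e2 : 3*H - 2*H = H := by omega
  rw [e1, e2, add_assoc]

theorem gradient_norm_sq_bound (H : ℕ) (hH : 0 < H) (α : ℝ)
    (φ : EuclideanSpace ℝ (Fin (3*H+1))) :
    ‖grad H α φ‖^2 ≤ (8 * ‖φ‖^2 + 4) * risk H α φ := by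
  have hreal : Continuous (realization H φ) := by
    unfold realization
    exact continuous_const.add (continuous_finset_sum _ fun j _ =>
      continuous_const.mul
        (((continuous_const.mul continuous_id).add continuous_const).max continuous_const))
  set F : ℝ → ℝ := fun x => realization H φ x - α with hFdef
  have hF : Continuous F := hreal.sub continuous_const
  set L : ℝ := ∫ x in Set.Icc (0:ℝ) 1, (F x)^2 with hLdef
  have hL0 : 0 ≤ L := setIntegral_nonneg measurableSet_Icc (fun x _ => sq_nonneg _)
  have hrisk : risk H α φ = L := by
    rw [risk, intervalIntegral.integral_of_le zero_le_one, hLdef,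
      integral_Icc_eq_integral_Ioc]
  have hact : ∀ j : Fin H, MeasurableSet (actSet H φ j) := fun j =>
    measurableSet_Icc.inter
      ((isOpen_lt continuous_const
        ((continuous_const.mul continuous_id).add continuous_const)).measurableSet)
  have hactsub : ∀ j : Fin H, actSet H φ j ⊆ Set.Icc (0:ℝ) 1 := fun j x hx => hx.1
  -- key per-coordinate bound
  have key : ∀ i : Fin (3*H+1), (grad H α φ i)^2 ≤ bnd H φ L i.1 := by
    intro i
    by_cases h : i.1 < H
    · rw [bnd, dif_pos h]
      simp only [grad, WithLp.ofLp_toLp, dif_pos h]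
      have hIb := bound_int F (fun x => x) hF continuous_id (actSet H φ ⟨i.1, h⟩)
        (hact _) (hactsub _) 1
        (fun x hx => abs_le.mpr ⟨by linarith [hx.1], hx.2⟩)
      set v := vp H φ ⟨i.1, h⟩
      set I := ∫ x in actSet H φ ⟨i.1, h⟩, x * (realization H φ x - α)
      have hIb' : I^2 ≤ L := by simpa [I, hFdef] using hIb
      nlinarith [sq_nonneg v, mul_le_mul_of_nonneg_left hIb' (sq_nonneg v)]
    · by_cases h2 : i.1 < 2*H
      · rw [bnd, dif_neg h, dif_pos h2]
        simp only [grad, WithLp.ofLp_toLp, dif_neg h, dif_pos h2]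
        have hIb := bound_int F (fun _ => (1:ℝ)) hF continuous_const
          (actSet H φ ⟨i.1 - H, by omega⟩) (hact _) (hactsub _) 1
          (fun x _ => by norm_num)
        set v := vp H φ ⟨i.1 - H, by omega⟩
        set I := ∫ x in actSet H φ ⟨i.1 - H, by omega⟩, (realization H φ x - α)
        have hIb' : I^2 ≤ L := by simpa [I, hFdef] using hIb
        nlinarith [sq_nonneg v, mul_le_mul_of_nonneg_left hIb' (sq_nonneg v)]
      · by_cases h3 : i.1 < 3*H
        · rw [bnd, dif_neg h, dif_neg h2, dif_pos h3]
          simp only [grad, WithLp.ofLp_toLp, dif_neg h, dif_neg h2, dif_pos h3]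
          set w := wp H φ ⟨i.1 - 2*H, by omega⟩
          set b := bp H φ ⟨i.1 - 2*H, by omega⟩
          have hg : Continuous (fun x : ℝ => max (w * x + b) 0) :=
            ((continuous_const.mul continuous_id).add continuous_const).max continuous_const
          have hIb := bound_int F (fun x => max (w * x + b) 0) hF hg
            (Set.Ioc 0 1) measurableSet_Ioc Set.Ioc_subset_Icc_self (|w| + |b|)
            (fun x hx => by
              rw [abs_of_nonneg (le_max_right _ _)]
              have h1 : max (w * x + b) 0 ≤ |w * x + b| :=
                max_le (le_abs_self _) (abs_nonneg _)
              have h2 : |w * x + b| ≤ |w| * |x| + |b| := by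
                calc |w * x + b| ≤ |w * x| + |b| := abs_add_le _ _
                  _ = |w| * |x| + |b| := by rw [abs_mul]
              have h3 : |x| ≤ 1 := abs_le.mpr ⟨by linarith [hx.1], hx.2⟩
              nlinarith [abs_nonneg w])
          rw [intervalIntegral.integral_of_le zero_le_one]
          set I := ∫ x in Set.Ioc (0:ℝ) 1, max (w * x + b) 0 * (realization H φ x - α)
          have hIb' : I^2 ≤ (|w| + |b|)^2 * L := by simpa [I, hFdef] using hIb
          have habsq : (|w| + |b|)^2 ≤ 2*(w^2 + b^2) := by
            nlinarith [sq_abs w, sq_abs b, sq_nonneg (|w| - |b|)]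
          nlinarith [mul_le_mul_of_nonneg_right habsq hL0]
        · rw [bnd, dif_neg h, dif_neg h2, dif_neg h3]
          simp only [grad, WithLp.ofLp_toLp, dif_neg h, dif_neg h2, dif_neg h3]
          have hIb := bound_int F (fun _ => (1:ℝ)) hF continuous_const
            (Set.Ioc 0 1) measurableSet_Ioc Set.Ioc_subset_Icc_self 1
            (fun x _ => by norm_num)
          rw [intervalIntegral.integral_of_le zero_le_one]
          set I := ∫ x in Set.Ioc (0:ℝ) 1, (realization H φ x - α)
          have hIb' : I^2 ≤ L := by simpa [I, hFdef] using hIb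
          nlinarith
  -- sums
  set W := ∑ j : Fin H, (wp H φ j)^2 with hW
  set B := ∑ j : Fin H, (bp H φ j)^2 with hB
  set V := ∑ j : Fin H, (vp H φ j)^2 with hV
  have hWn : 0 ≤ W := Finset.sum_nonneg fun j _ => sq_nonneg _
  have hBn : 0 ≤ B := Finset.sum_nonneg fun j _ => sq_nonneg _
  have hVn : 0 ≤ V := Finset.sum_nonneg fun j _ => sq_nonneg _
  have hbndsum : ∑ i ∈ Finset.range (3*H+1), bnd H φ L i
      = 8*(V + W + B)*L + 4*L := by
    rw [split_sum]
    have e1 : ∑ i ∈ Finset.range H, bnd H φ L i = 4*V*L := by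
      rw [← Fin.sum_univ_eq_sum_range (fun i => bnd H φ L i) H]
      calc ∑ j : Fin H, bnd H φ L j.1 = ∑ j : Fin H, (vp H φ j)^2 * (4*L) :=
            Finset.sum_congr rfl fun j _ => by rw [bnd_eval1]; ring
        _ = V * (4*L) := by rw [hV, Finset.sum_mul]
        _ = 4*V*L := by ring
    have e2 : ∑ i ∈ Finset.range H, bnd H φ L (H+i) = 4*V*L := by
      rw [← Fin.sum_univ_eq_sum_range (fun i => bnd H φ L (H+i)) H]
      calc ∑ j : Fin H, bnd H φ L (H+j.1) = ∑ j : Fin H, (vp H φ j)^2 * (4*L) :=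
            Finset.sum_congr rfl fun j _ => by rw [bnd_eval2]; ring
        _ = V * (4*L) := by rw [hV, Finset.sum_mul]
        _ = 4*V*L := by ring
    have e3 : ∑ i ∈ Finset.range H, bnd H φ L (2*H+i) = 8*(W+B)*L := by
      rw [← Fin.sum_univ_eq_sum_range (fun i => bnd H φ L (2*H+i)) H]
      calc ∑ j : Fin H, bnd H φ L (2*H+j.1)
            = ∑ j : Fin H, ((wp H φ j)^2 * (8*L) + (bp H φ j)^2 * (8*L)) :=
            Finset.sum_congr rfl fun j _ => by rw [bnd_eval3]; ring
        _ = W * (8*L) + B * (8*L) := by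
            rw [Finset.sum_add_distrib, hW, hB, Finset.sum_mul, Finset.sum_mul]
        _ = 8*(W+B)*L := by ring
    rw [e1, e2, e3, bnd_eval4]
    ring
  have hphinorm : ‖φ‖^2 = W + B + V + (cp H φ)^2 := by
    have h1 : ‖φ‖^2 = ∑ i : Fin (3*H+1), (φ i)^2 := by
      rw [EuclideanSpace.norm_eq, Real.sq_sqrt (Finset.sum_nonneg fun i _ => by positivity)]
      simp [Real.norm_eq_abs, sq_abs]
    have h2 : ∑ i : Fin (3*H+1), (φ i)^2 = ∑ i : Fin (3*H+1), sqcoord H φ i.1 :=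
      Finset.sum_congr rfl fun i _ => by rw [sqcoord, dif_pos i.isLt, Fin.eta]
    rw [h1, h2, Fin.sum_univ_eq_sum_range (fun n => sqcoord H φ n) (3*H+1), split_sum]
    have e1 : ∑ i ∈ Finset.range H, sqcoord H φ i = W := by
      rw [← Fin.sum_univ_eq_sum_range (fun i => sqcoord H φ i) H, hW]
      exact Finset.sum_congr rfl fun j _ => sqcoord_w H φ j
    have e2 : ∑ i ∈ Finset.range H, sqcoord H φ (H+i) = B := by
      rw [← Fin.sum_univ_eq_sum_range (fun i => sqcoord H φ (H+i)) H, hB]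
      exact Finset.sum_congr rfl fun j _ => sqcoord_b H φ j
    have e3 : ∑ i ∈ Finset.range H, sqcoord H φ (2*H+i) = V := by
      rw [← Fin.sum_univ_eq_sum_range (fun i => sqcoord H φ (2*H+i)) H, hV]
      exact Finset.sum_congr rfl fun j _ => sqcoord_v H φ j
    rw [e1, e2, e3, sqcoord_c]
  have hgradnorm : ‖grad H α φ‖^2 = ∑ i : Fin (3*H+1), (grad H α φ i)^2 := by
    rw [EuclideanSpace.norm_eq, Real.sq_sqrt (Finset.sum_nonneg fun i _ => by positivity)]
    simp [Real.norm_eq_abs, sq_abs]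
  have hmain : ‖grad H α φ‖^2 ≤ 8*(V + W + B)*L + 4*L := by
    rw [hgradnorm, ← hbndsum,
      ← Fin.sum_univ_eq_sum_range (fun n => bnd H φ L n) (3*H+1)]
    exact Finset.sum_le_sum fun i _ => key i
  rw [hrisk]
  nlinarith [sq_nonneg (cp H φ), hphinorm, hmain, hL0,
    mul_le_mul_of_nonneg_right (show V+W+B ≤ ‖φ‖^2 by nlinarith [sq_nonneg (cp H φ)]) hL0]
end
end
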